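/- Let n be a positive integer, H a complex Hilbert space, Σ ⊆ 𝔽ₙ⁺ a nonempty admissible set, and L : Σ → B(H). Then there exist a complex Hilbert space E, a linear isometry ι : H → E, and isometries W₁,…,Wₙ ∈ B(E) with pairwise orthogonal ranges (Wᵢ*Wᵢ = I and Wᵢ*Wⱼ = 0 for i ≠ j) such that W_σ ∘ ι ∘ L(g₀) = ι ∘ L(σ) for every σ ∈ Σ — equivalently, there is a *-representation π of the Cuntz–Toeplitz algebra C*(S₁,…,Sₙ) on E ⊇ H with L(p) = π(p(S₁,…,Sₙ))L(g₀) for all p ∈ ℂΣ — if and only if K₁ = K₂. -/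

import Mathlib

/-!
Statement 3: moment problem for *-representations of the Cuntz–Toeplitz algebra,
stated via n-tuples of isometries with pairwise orthogonal ranges.
-/

open scoped InnerProductSpace ComplexOrder ComplexInnerProductSpace Classical
open ContinuousLinearMap

noncomputable section

universe u

/-- Words in the free monoid `𝔽ₙ⁺` on `n` generators (the empty word is `g₀`). -/
abbrev Wd (n : ℕ) := List (Fin n)

/-- A set `Σ ⊆ 𝔽ₙ⁺` is admissible if `αβ ∈ Σ` implies `β ∈ Σ`. -/
def Adm {n : ℕ} (S : Set (Wd n)) : Prop := ∀ α β : Wd n, α ++ β ∈ S → β ∈ S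

/-- `σ ≤ α` : `σ` is a prefix of `α`, i.e. `α = στ` for some `τ`. -/
def pfx {n : ℕ} (σ α : Wd n) : Prop := ∃ τ : Wd n, α = σ ++ τ

/-- `α ∖ σ` : the unique `τ` with `α = στ` when `σ ≤ α`. -/
def wq {n : ℕ} (α σ : Wd n) : Wd n := α.drop σ.length

/-- `W_α = W_{i₁} ⋯ W_{i_k}` for a word `α = g_{i₁} ⋯ g_{i_k}`, `W_{g₀} = I`. -/
def wordOp {E : Type*} [NormedAddCommGroup E] [InnerProductSpace ℂ E]
    {n : ℕ} (T : Fin n → (E →L[ℂ] E)) (α : Wd n) : E →L[ℂ] E := (α.map T).prod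

set_option linter.unusedSectionVars false

-- word lemmas
theorem pfx_nil {n : ℕ} (σ : Wd n) : pfx [] σ := ⟨σ, rfl⟩

theorem not_pfx_cons_nil {n : ℕ} (i : Fin n) (α : Wd n) : ¬ pfx (i :: α) [] := by
  rintro ⟨τ, h⟩; simp at h

theorem pfx_cons_cons {n : ℕ} {i j : Fin n} {α σ : Wd n} :
    pfx (i :: α) (j :: σ) ↔ i = j ∧ pfx α σ := by
  constructor
  · rintro ⟨τ, h⟩
    rw [List.cons_append] at h
    injection h with h1 h2
    exact ⟨h1.symm, τ, h2⟩
  · rintro ⟨rfl, τ, rfl⟩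
    exact ⟨τ, rfl⟩

theorem wq_nil {n : ℕ} (σ : Wd n) : wq σ ([] : Wd n) = σ := by simp [wq]

theorem wq_cons {n : ℕ} (j i : Fin n) (σ α : Wd n) : wq (j :: σ) (i :: α) = wq σ α := rfl

theorem pfx_eq {n : ℕ} {α σ : Wd n} (h : pfx α σ) : σ = α ++ wq σ α := by
  obtain ⟨τ, rfl⟩ := h
  rw [wq, List.drop_left]

theorem wordOp_nil {E : Type*} [NormedAddCommGroup E] [InnerProductSpace ℂ E]
    {n : ℕ} (T : Fin n → (E →L[ℂ] E)) : wordOp T ([] : Wd n) = 1 := rfl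

theorem wordOp_cons {E : Type*} [NormedAddCommGroup E] [InnerProductSpace ℂ E]
    {n : ℕ} (T : Fin n → (E →L[ℂ] E)) (i : Fin n) (α : Wd n) :
    wordOp T (i :: α) = T i * wordOp T α := by
  simp [wordOp]

theorem wordOp_append {E : Type*} [NormedAddCommGroup E] [InnerProductSpace ℂ E]
    {n : ℕ} (T : Fin n → (E →L[ℂ] E)) (α β : Wd n) :
    wordOp T (α ++ β) = wordOp T α * wordOp T β := by
  simp [wordOp]

section AdjWord
variable {E : Type*} [NormedAddCommGroup E] [InnerProductSpace ℂ E] [CompleteSpace E]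
variable {n : ℕ} (W : Fin n → (E →L[ℂ] E))

theorem adjoint_mul (A B : E →L[ℂ] E) : adjoint (A * B) = adjoint B * adjoint A := by
  rw [← ContinuousLinearMap.star_eq_adjoint, star_mul, ContinuousLinearMap.star_eq_adjoint,
    ContinuousLinearMap.star_eq_adjoint]

theorem adjoint_one' : adjoint (1 : E →L[ℂ] E) = 1 := by
  rw [← ContinuousLinearMap.star_eq_adjoint, star_one]

theorem adj_word (hisom : ∀ i, adjoint (W i) * W i = 1)
    (horth : ∀ i j, i ≠ j → adjoint (W i) * W j = 0) :
    ∀ α σ : Wd n, adjoint (wordOp W α) * wordOp W σ =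
      if pfx α σ then wordOp W (wq σ α)
      else if pfx σ α then adjoint (wordOp W (wq α σ)) else 0 := by
  intro α
  induction α with
  | nil =>
    intro σ
    rw [if_pos (pfx_nil σ), wq_nil, wordOp_nil, adjoint_one', one_mul]
  | cons i α ih =>
    intro σ
    cases σ with
    | nil =>
      rw [if_neg (not_pfx_cons_nil _ _), if_pos (pfx_nil _), wq_nil, wordOp_nil, mul_one]
    | cons j σ =>
      rw [wordOp_cons, wordOp_cons, adjoint_mul, mul_assoc, ← mul_assoc (adjoint (W i))]
      by_cases hij : i = j
      · subst hij
        rw [hisom i, one_mul, ih σ]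
        by_cases h1 : pfx α σ
        · rw [if_pos h1, if_pos (pfx_cons_cons.mpr ⟨rfl, h1⟩), wq_cons]
        · rw [if_neg h1, if_neg (fun h => h1 (pfx_cons_cons.mp h).2)]
          by_cases h2 : pfx σ α
          · rw [if_pos h2, if_pos (pfx_cons_cons.mpr ⟨rfl, h2⟩), wq_cons]
          · rw [if_neg h2, if_neg (fun h => h2 (pfx_cons_cons.mp h).2)]
      · rw [horth i j hij, zero_mul, mul_zero]
        rw [if_neg (fun h => hij (pfx_cons_cons.mp h).1),
          if_neg (fun h => hij ((pfx_cons_cons.mp h).1).symm)]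

end AdjWord

variable {H : Type u} [NormedAddCommGroup H] [InnerProductSpace ℂ H] [CompleteSpace H]

/-- `K₁((α,β),(σ,γ)) = L(αβ)* L(σγ)`. -/
def K1 {n : ℕ} (L : Wd n → (H →L[ℂ] H)) (x y : Wd n × Wd n) : H →L[ℂ] H :=
  adjoint (L (x.1 ++ x.2)) * L (y.1 ++ y.2)

/-- `K₂((α,β),(σ,γ)) = L(β)* L((σ∖α)γ)` if `α ≤ σ`, `L((α∖σ)β)* L(γ)` if `σ < α`,
and `0` otherwise. -/
def K2 {n : ℕ} (L : Wd n → (H →L[ℂ] H)) (x y : Wd n × Wd n) : H →L[ℂ] H :=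
  if pfx x.1 y.1 then adjoint (L x.2) * L (wq y.1 x.1 ++ y.2)
  else if pfx y.1 x.1 then adjoint (L (wq x.1 y.1 ++ x.2)) * L y.2
  else 0

/-- A dilation of `L` to a Hilbert space `E ⊇ H` carrying isometries `W₁,…,Wₙ` with
pairwise orthogonal ranges (equivalently, a *-representation of `C*(S₁,…,Sₙ)`), with
`W_σ ∘ ι ∘ L(g₀) = ι ∘ L(σ)` for all `σ ∈ Σ`. -/
structure IsomRep (n : ℕ) (H : Type u) [NormedAddCommGroup H] [InnerProductSpace ℂ H]
    [CompleteSpace H] (S : Set (Wd n)) (L : Wd n → (H →L[ℂ] H)) : Type (u + 1) where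
  E : Type u
  [instN : NormedAddCommGroup E]
  [instI : InnerProductSpace ℂ E]
  [instC : CompleteSpace E]
  ι : H →ₗᵢ[ℂ] E
  W : Fin n → (E →L[ℂ] E)
  isom : ∀ i, adjoint (W i) * W i = 1
  orth : ∀ i j, i ≠ j → adjoint (W i) * W j = 0
  moment : ∀ σ ∈ S, ∀ h : H, wordOp W σ (ι ((L ([] : Wd n)) h)) = ι ((L σ) h)

theorem forward_dir {n : ℕ} (S : Set (Wd n)) (hadm : Adm S)
    (L : Wd n → (H →L[ℂ] H)) (R : IsomRep n H S L) :
    ∀ x y : {p : Wd n × Wd n // p.1 ++ p.2 ∈ S}, K1 L x.1 y.1 = K2 L x.1 y.1 := by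
  letI := R.instN
  letI := R.instI
  letI := R.instC
  rintro ⟨⟨α, β⟩, hx⟩ ⟨⟨σ, γ⟩, hy⟩
  simp only at hx hy
  refine ContinuousLinearMap.ext fun h => ?_
  refine ext_inner_left ℂ fun k => ?_
  have hβS : β ∈ S := hadm α β hx
  have hγS : γ ∈ S := hadm σ γ hy
  have key : ∀ u : Wd n, u ∈ S → ∀ v : H, wordOp R.W u (R.ι (L ([] : Wd n) v)) = R.ι (L u v) :=
    fun u hu v => R.moment u hu v
  have adjw := adj_word R.W R.isom R.orth α σ
  have start : ⟪k, (K1 L (α, β) (σ, γ)) h⟫_ℂ =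
      ⟪R.ι (L ([] : Wd n) k),
        (adjoint (wordOp R.W β) * ((adjoint (wordOp R.W α) * wordOp R.W σ) * wordOp R.W γ))
          (R.ι (L ([] : Wd n) h))⟫_ℂ := by
    have hop : adjoint (wordOp R.W (α ++ β)) * wordOp R.W (σ ++ γ)
        = adjoint (wordOp R.W β) * ((adjoint (wordOp R.W α) * wordOp R.W σ) * wordOp R.W γ) := by
      simp only [wordOp_append, adjoint_mul, mul_assoc]
    calc ⟪k, (K1 L (α, β) (σ, γ)) h⟫_ℂ
        = ⟪R.ι (L (α ++ β) k), R.ι (L (σ ++ γ) h)⟫_ℂ := by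
          rw [K1, ContinuousLinearMap.mul_apply, adjoint_inner_right,
            LinearIsometry.inner_map_map]
      _ = ⟪wordOp R.W (α ++ β) (R.ι (L ([] : Wd n) k)),
            wordOp R.W (σ ++ γ) (R.ι (L ([] : Wd n) h))⟫_ℂ := by rw [key _ hx, key _ hy]
      _ = ⟪R.ι (L ([] : Wd n) k),
            (adjoint (wordOp R.W (α ++ β)) * wordOp R.W (σ ++ γ))
              (R.ι (L ([] : Wd n) h))⟫_ℂ := by
          rw [ContinuousLinearMap.mul_apply]
          exact (adjoint_inner_right _ _ _).symm
      _ = _ := by rw [hop]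
  show ⟪k, (K1 L (α, β) (σ, γ)) h⟫_ℂ = ⟪k, (K2 L (α, β) (σ, γ)) h⟫_ℂ
  by_cases h1 : pfx α σ
  · have hmem : wq σ α ++ γ ∈ S := by
      refine hadm α (wq σ α ++ γ) ?_
      rw [← List.append_assoc, ← pfx_eq h1]; exact hy
    rw [start, K2]
    simp only [if_pos h1]
    rw [adjw, if_pos h1]
    calc ⟪R.ι (L ([] : Wd n) k),
          (adjoint (wordOp R.W β) * (wordOp R.W (wq σ α) * wordOp R.W γ))
            (R.ι (L ([] : Wd n) h))⟫_ℂ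
        = ⟪R.ι (L ([] : Wd n) k),
            adjoint (wordOp R.W β) (wordOp R.W (wq σ α ++ γ) (R.ι (L ([] : Wd n) h)))⟫_ℂ := by
          rw [ContinuousLinearMap.mul_apply, wordOp_append, ContinuousLinearMap.mul_apply]
      _ = ⟪wordOp R.W β (R.ι (L ([] : Wd n) k)), R.ι (L (wq σ α ++ γ) h)⟫_ℂ := by
          rw [key _ hmem, adjoint_inner_right]
      _ = ⟪L β k, L (wq σ α ++ γ) h⟫_ℂ := by rw [key _ hβS, LinearIsometry.inner_map_map]
      _ = ⟪k, (adjoint (L β) * L (wq σ α ++ γ)) h⟫_ℂ := by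
          rw [ContinuousLinearMap.mul_apply]
          exact (adjoint_inner_right _ _ _).symm
  · by_cases h2 : pfx σ α
    · have hmem : wq α σ ++ β ∈ S := by
        refine hadm σ (wq α σ ++ β) ?_
        rw [← List.append_assoc, ← pfx_eq h2]; exact hx
      rw [start, K2]
      simp only [if_neg h1, if_pos h2]
      rw [adjw, if_neg h1, if_pos h2]
      calc ⟪R.ι (L ([] : Wd n) k),
            (adjoint (wordOp R.W β) * (adjoint (wordOp R.W (wq α σ)) * wordOp R.W γ))
              (R.ι (L ([] : Wd n) h))⟫_ℂ
          = ⟪R.ι (L ([] : Wd n) k),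
              (adjoint (wordOp R.W (wq α σ ++ β)) * wordOp R.W γ)
                (R.ι (L ([] : Wd n) h))⟫_ℂ := by
            rw [wordOp_append, adjoint_mul, mul_assoc]
        _ = ⟪wordOp R.W (wq α σ ++ β) (R.ι (L ([] : Wd n) k)),
              wordOp R.W γ (R.ι (L ([] : Wd n) h))⟫_ℂ := by
            rw [ContinuousLinearMap.mul_apply, adjoint_inner_right]
        _ = ⟪L (wq α σ ++ β) k, L γ h⟫_ℂ := by
            rw [key _ hmem, key _ hγS, LinearIsometry.inner_map_map]
        _ = ⟪k, (adjoint (L (wq α σ ++ β)) * L γ) h⟫_ℂ := by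
            rw [ContinuousLinearMap.mul_apply]
            exact (adjoint_inner_right _ _ _).symm
    · rw [start, K2]
      simp only [if_neg h1, if_neg h2]
      rw [adjw, if_neg h1, if_neg h2]
      simp

/-- Generators of the graph of the partial shift `L w h ↦ L (i::w) h`. -/
def gensSet {n : ℕ} (S : Set (Wd n)) (L : Wd n → (H →L[ℂ] H)) (i : Fin n) : Set (H × H) :=
  {p | ∃ w : Wd n, (i :: w) ∈ S ∧ ∃ h : H, p = (L w h, L (i :: w) h)}

/-- Closure of the span of the graph generators. -/
def Gcl {n : ℕ} (S : Set (Wd n)) (L : Wd n → (H →L[ℂ] H)) (i : Fin n) : Submodule ℂ (H × H) :=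
  (Submodule.span ℂ (gensSet S L i)).topologicalClosure

/-- Closed domain of the partial shift. -/
def Dcl {n : ℕ} (S : Set (Wd n)) (L : Wd n → (H →L[ℂ] H)) (i : Fin n) : Submodule ℂ H :=
  (Submodule.span ℂ (Prod.fst '' gensSet S L i)).topologicalClosure

theorem mem_Dcl {n : ℕ} {S : Set (Wd n)} {L : Wd n → (H →L[ℂ] H)} {i : Fin n} {w : Wd n}
    (hw : (i :: w) ∈ S) (h : H) : L w h ∈ Dcl S L i :=
  Submodule.le_topologicalClosure _
    (Submodule.subset_span ⟨(L w h, L (i :: w) h), ⟨w, hw, h, rfl⟩, rfl⟩)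

theorem mem_Gcl {n : ℕ} {S : Set (Wd n)} {L : Wd n → (H →L[ℂ] H)} {i : Fin n} {w : Wd n}
    (hw : (i :: w) ∈ S) (h : H) : (L w h, L (i :: w) h) ∈ Gcl S L i :=
  Submodule.le_topologicalClosure _ (Submodule.subset_span ⟨w, hw, h, rfl⟩)

theorem fst_mem_Dcl {n : ℕ} {S : Set (Wd n)} {L : Wd n → (H →L[ℂ] H)} {i : Fin n}
    {p : H × H} (hp : p ∈ Gcl S L i) : p.1 ∈ Dcl S L i := by
  have h1 : p ∈ closure ((Submodule.span ℂ (gensSet S L i) : Set (H × H))) := by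
    rw [← Submodule.topologicalClosure_coe]; exact hp
  have h2 : p.1 ∈ Prod.fst '' closure ((Submodule.span ℂ (gensSet S L i) : Set (H × H))) :=
    ⟨p, h1, rfl⟩
  have h3 := image_closure_subset_closure_image (f := Prod.fst)
    (s := (Submodule.span ℂ (gensSet S L i) : Set (H × H))) continuous_fst h2
  have h5 : Prod.fst '' ((Submodule.span ℂ (gensSet S L i) : Set (H × H))) =
      ((Submodule.map (LinearMap.fst ℂ H H) (Submodule.span ℂ (gensSet S L i)) : Set H)) := rfl
  rw [h5, Submodule.map_span] at h3
  exact h3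

theorem key_inner {n : ℕ} {S : Set (Wd n)} {L : Wd n → (H →L[ℂ] H)}
    (hR : ∀ (i : Fin n) (u v : Wd n), (i :: u) ∈ S → (i :: v) ∈ S → ∀ h k : H,
      ⟪L (i :: u) h, L (i :: v) k⟫_ℂ = ⟪L u h, L v k⟫_ℂ)
    (hO : ∀ (i j : Fin n), i ≠ j → ∀ (u v : Wd n), (i :: u) ∈ S → (j :: v) ∈ S → ∀ h k : H,
      ⟪L (i :: u) h, L (j :: v) k⟫_ℂ = 0)
    {i j : Fin n} {p q : H × H} (hp : p ∈ Gcl S L i) (hq : q ∈ Gcl S L j) :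
    ⟪p.2, q.2⟫_ℂ = if i = j then ⟪p.1, q.1⟫_ℂ else 0 := by
  set c : ℂ := if i = j then 1 else 0 with hc
  have main : ⟪p.2, q.2⟫_ℂ = c * ⟪p.1, q.1⟫_ℂ := by
    -- step 1 : both in the span
    have hspan : ∀ p' ∈ Submodule.span ℂ (gensSet S L i),
        ∀ q' ∈ Submodule.span ℂ (gensSet S L j), ⟪p'.2, q'.2⟫_ℂ = c * ⟪p'.1, q'.1⟫_ℂ := by
      have hgen : ∀ p' ∈ gensSet S L i, ∀ q' ∈ Submodule.span ℂ (gensSet S L j),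
          ⟪p'.2, q'.2⟫_ℂ = c * ⟪p'.1, q'.1⟫_ℂ := by
        rintro p' ⟨w, hw, h, rfl⟩ q' hq'
        induction hq' using Submodule.span_induction with
        | mem x hx =>
          obtain ⟨v, hv, k, rfl⟩ := hx
          by_cases hij : i = j
          · subst hij
            rw [show c = 1 by simp [hc], one_mul]
            exact hR i w v hw hv h k
          · rw [show c = 0 by simp [hc, hij], zero_mul]
            exact hO i j hij w v hw hv h k
        | zero => simp
        | add x y hx hy ihx ihy =>
          simp only [Prod.snd_add, Prod.fst_add, inner_add_right, ihx, ihy, mul_add]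
        | smul a x hx ihx =>
          simp only [Prod.smul_snd, Prod.smul_fst, inner_smul_right, ihx]
          ring
      intro p' hp' q' hq'
      induction hp' using Submodule.span_induction with
      | mem x hx => exact hgen x hx q' hq'
      | zero => simp
      | add x y hx hy ihx ihy =>
        simp only [Prod.snd_add, Prod.fst_add, inner_add_left, ihx, ihy, mul_add]
      | smul a x hx ihx =>
        simp only [Prod.smul_snd, Prod.smul_fst, inner_smul_left, ihx]
        ring
    -- step 2 : close up in the first variable
    have hcl1 : ∀ q' ∈ Submodule.span ℂ (gensSet S L j),
        ∀ p' ∈ Gcl S L i, ⟪p'.2, q'.2⟫_ℂ = c * ⟪p'.1, q'.1⟫_ℂ := by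
      intro q' hq' p' hp'
      have hsubset : (Submodule.span ℂ (gensSet S L i) : Set (H × H))
          ⊆ {r : H × H | ⟪r.2, q'.2⟫_ℂ = c * ⟪r.1, q'.1⟫_ℂ} :=
        fun r hr => hspan r hr q' hq'
      have hclosed : IsClosed {r : H × H | ⟪r.2, q'.2⟫_ℂ = c * ⟪r.1, q'.1⟫_ℂ} :=
        isClosed_eq (Continuous.inner continuous_snd continuous_const)
          (continuous_const.mul (Continuous.inner continuous_fst continuous_const))
      have := closure_minimal hsubset hclosed
      have hp'' : p' ∈ closure ((Submodule.span ℂ (gensSet S L i) : Set (H × H))) := by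
        rw [← Submodule.topologicalClosure_coe]; exact hp'
      exact this hp''
    -- step 3 : close up in the second variable
    have hsubset : (Submodule.span ℂ (gensSet S L j) : Set (H × H))
        ⊆ {r : H × H | ⟪p.2, r.2⟫_ℂ = c * ⟪p.1, r.1⟫_ℂ} :=
      fun r hr => hcl1 r hr p hp
    have hclosed : IsClosed {r : H × H | ⟪p.2, r.2⟫_ℂ = c * ⟪p.1, r.1⟫_ℂ} :=
      isClosed_eq (Continuous.inner continuous_const continuous_snd)
        (continuous_const.mul (Continuous.inner continuous_const continuous_fst))
    have hq'' : q ∈ closure ((Submodule.span ℂ (gensSet S L j) : Set (H × H))) := by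
      rw [← Submodule.topologicalClosure_coe]; exact hq
    exact closure_minimal hsubset hclosed hq''
  rw [main, hc]
  by_cases hij : i = j
  · simp [hij]
  · simp [hij]

/-- Bundled kernel hypotheses. -/
def KeyHyp {n : ℕ} (S : Set (Wd n)) (L : Wd n → (H →L[ℂ] H)) : Prop :=
  (∀ (i : Fin n) (u v : Wd n), (i :: u) ∈ S → (i :: v) ∈ S → ∀ h k : H,
      ⟪L (i :: u) h, L (i :: v) k⟫_ℂ = ⟪L u h, L v k⟫_ℂ) ∧
  (∀ (i j : Fin n), i ≠ j → ∀ (u v : Wd n), (i :: u) ∈ S → (j :: v) ∈ S → ∀ h k : H,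
      ⟪L (i :: u) h, L (j :: v) k⟫_ℂ = 0)

section ExistsA
variable {n : ℕ} {S : Set (Wd n)} {L : Wd n → (H →L[ℂ] H)}

instance instCompleteGcl (i : Fin n) : CompleteSpace ↥(Gcl S L i) := by
  unfold Gcl; infer_instance

instance instCompleteDcl (i : Fin n) : CompleteSpace ↥(Dcl S L i) := by
  unfold Dcl; infer_instance

theorem Gcl_norm (hk : KeyHyp S L) {i : Fin n} {p : H × H} (hp : p ∈ Gcl S L i) :
    ‖p.2‖ = ‖p.1‖ := by
  have h1 := key_inner hk.1 hk.2 hp hp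
  rw [if_pos rfl] at h1
  have h2 : ‖p.2‖ ^ 2 = ‖p.1‖ ^ 2 := by
    have ha := inner_self_eq_norm_sq (𝕜 := ℂ) p.2
    have hb := inner_self_eq_norm_sq (𝕜 := ℂ) p.1
    rw [h1] at ha
    exact ha.symm.trans hb
  have h3 := congrArg Real.sqrt h2
  rwa [Real.sqrt_sq (norm_nonneg _), Real.sqrt_sq (norm_nonneg _)] at h3

/-- The graph closure, viewed as a map to the domain closure. -/
def eIso (hk : KeyHyp S L) (i : Fin n) : ↥(Gcl S L i) →ₗᵢ[ℂ] ↥(Dcl S L i) where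
  toFun p := ⟨(p : H × H).1, fst_mem_Dcl p.2⟩
  map_add' p q := rfl
  map_smul' c p := rfl
  norm_map' p := by
    have h := Gcl_norm hk p.2
    show ‖(p : H × H).1‖ = ‖(p : H × H)‖
    rw [Prod.norm_def, h, max_self]

/-- The graph closure, viewed as a map to `H`. -/
def eH (hk : KeyHyp S L) (i : Fin n) : ↥(Gcl S L i) →ₗᵢ[ℂ] H where
  toFun p := (p : H × H).1
  map_add' p q := rfl
  map_smul' c p := rfl
  norm_map' p := by
    have h := Gcl_norm hk p.2
    show ‖(p : H × H).1‖ = ‖(p : H × H)‖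
    rw [Prod.norm_def, h, max_self]

theorem eIso_surj (hk : KeyHyp S L) (i : Fin n) : Function.Surjective (eIso hk i) := by
  have hclosed : IsClosed (Set.range (eH hk i)) :=
    (eH hk i).isometry.isClosedEmbedding.isClosed_range
  have hsub : (Dcl S L i : Set H) ⊆ Set.range (eH hk i) := by
    have hsp : (Submodule.span ℂ (Prod.fst '' gensSet S L i) : Set H)
        ⊆ Set.range (eH hk i) := by
      intro x hx
      have hx' : x ∈ (Submodule.map (LinearMap.fst ℂ H H)
          (Submodule.span ℂ (gensSet S L i)) : Set H) := by
        rw [Submodule.map_span]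
        exact hx
      obtain ⟨p, hp, rfl⟩ := hx'
      exact ⟨⟨p, Submodule.le_topologicalClosure _ hp⟩, rfl⟩
    rw [show (Dcl S L i : Set H)
        = closure ((Submodule.span ℂ (Prod.fst '' gensSet S L i) : Set H)) from rfl]
    exact closure_minimal hsp hclosed
  intro d
  obtain ⟨p, hp⟩ := hsub d.2
  exact ⟨p, Subtype.ext hp⟩

/-- The isometric identification of the graph closure with the domain closure. -/
def AEquiv (hk : KeyHyp S L) (i : Fin n) : ↥(Gcl S L i) ≃ₗᵢ[ℂ] ↥(Dcl S L i) :=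
  LinearIsometryEquiv.ofSurjective (eIso hk i) (eIso_surj hk i)

/-- The partial shift operator `A i` on `H`. -/
def Amap (hk : KeyHyp S L) (i : Fin n) : H →L[ℂ] H :=
  LinearMap.mkContinuous
    { toFun := fun x => (((AEquiv hk i).symm
          (Submodule.orthogonalProjectionOnto (Dcl S L i) x) : ↥(Gcl S L i)) : H × H).2
      map_add' := fun x y => by
        simp only [map_add, Submodule.coe_add, Prod.snd_add]
      map_smul' := fun c x => by
        simp only [map_smul, RingHom.id_apply, Submodule.coe_smul, Prod.smul_snd] }
    1
    (fun x => by
      refine le_trans (norm_snd_le _) ?_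
      have h1 : ‖((((AEquiv hk i).symm (Submodule.orthogonalProjectionOnto (Dcl S L i) x)) :
          ↥(Gcl S L i)) : H × H)‖ = ‖Submodule.orthogonalProjectionOnto (Dcl S L i) x‖ := by
        rw [show ‖((((AEquiv hk i).symm (Submodule.orthogonalProjectionOnto (Dcl S L i) x)) :
            ↥(Gcl S L i)) : H × H)‖
          = ‖(AEquiv hk i).symm (Submodule.orthogonalProjectionOnto (Dcl S L i) x)‖ from rfl]
        rw [LinearIsometryEquiv.norm_map]
      rw [h1, one_mul]
      refine le_trans ((Submodule.orthogonalProjectionOnto (Dcl S L i)).le_opNorm x) ?_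
      exact mul_le_of_le_one_left (norm_nonneg x) (Submodule.orthogonalProjectionOnto_norm_le _))

theorem Amap_apply' (hk : KeyHyp S L) (i : Fin n) (x : H) :
    Amap hk i x = (((AEquiv hk i).symm
      (Submodule.orthogonalProjectionOnto (Dcl S L i) x) : ↥(Gcl S L i)) : H × H).2 := rfl

theorem Amap_fst (hk : KeyHyp S L) (i : Fin n) (x : H) :
    (((AEquiv hk i).symm
      (Submodule.orthogonalProjectionOnto (Dcl S L i) x) : ↥(Gcl S L i)) : H × H).1
      = (Submodule.orthogonalProjectionOnto (Dcl S L i) x : H) := by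
  have h1 : eIso hk i ((AEquiv hk i).symm (Submodule.orthogonalProjectionOnto (Dcl S L i) x))
      = Submodule.orthogonalProjectionOnto (Dcl S L i) x := by
    have h2 := (AEquiv hk i).apply_symm_apply (Submodule.orthogonalProjectionOnto (Dcl S L i) x)
    rwa [show ⇑(AEquiv hk i) = ⇑(eIso hk i) from
      LinearIsometryEquiv.coe_ofSurjective _ _] at h2
  exact congrArg Subtype.val h1

theorem Amap_moment (hk : KeyHyp S L) {i : Fin n} {w : Wd n} (hw : (i :: w) ∈ S) (h : H) :
    Amap hk i (L w h) = L (i :: w) h := by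
  have hx : L w h ∈ Dcl S L i := mem_Dcl hw h
  have hPx : Submodule.orthogonalProjectionOnto (Dcl S L i) (L w h) = ⟨L w h, hx⟩ :=
    Subtype.ext (Submodule.starProjection_eq_self_iff.mpr hx)
  have hg : ((L w h, L (i :: w) h) : H × H) ∈ Gcl S L i := mem_Gcl hw h
  have happ : AEquiv hk i ⟨(L w h, L (i :: w) h), hg⟩ = ⟨L w h, hx⟩ := by
    have h3 : AEquiv hk i ⟨(L w h, L (i :: w) h), hg⟩
        = eIso hk i ⟨(L w h, L (i :: w) h), hg⟩ := by
      rw [show ⇑(AEquiv hk i) = ⇑(eIso hk i) from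
        LinearIsometryEquiv.coe_ofSurjective _ _]
    rw [h3]
    rfl
  have hsymm : (AEquiv hk i).symm ⟨L w h, hx⟩ = ⟨(L w h, L (i :: w) h), hg⟩ := by
    rw [← happ, LinearIsometryEquiv.symm_apply_apply]
  rw [Amap_apply', hPx, hsymm]

theorem Amap_inner (hk : KeyHyp S L) (i j : Fin n) (x y : H) :
    ⟪Amap hk i x, Amap hk j y⟫_ℂ =
      if i = j then ⟪(Submodule.orthogonalProjectionOnto (Dcl S L i) x : H),
        (Submodule.orthogonalProjectionOnto (Dcl S L j) y : H)⟫_ℂ else 0 := by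
  have hkey := key_inner hk.1 hk.2
    (((AEquiv hk i).symm (Submodule.orthogonalProjectionOnto (Dcl S L i) x)).2)
    (((AEquiv hk j).symm (Submodule.orthogonalProjectionOnto (Dcl S L j) y)).2)
  rw [Amap_fst, Amap_fst] at hkey
  exact hkey

end ExistsA

/-- The Hilbert dilation space `ℓ²(𝔽ₙ⁺, H)`. -/
abbrev Fk (H : Type u) [NormedAddCommGroup H] [InnerProductSpace ℂ H] (n : ℕ) :=
  lp (fun _ : Wd n => H) 2

theorem two_toReal_pos : 0 < (2 : ENNReal).toReal := by norm_num

/-- `lp.single` as a linear isometry. -/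
def sgl (w : Wd n) : H →ₗᵢ[ℂ] Fk H n where
  toFun h := lp.single 2 w h
  map_add' a b := by
    refine lp.ext (funext fun v => ?_)
    rw [lp.coeFn_add]
    by_cases hv : v = w
    · subst hv
      simp [lp.single_apply_self]
    · simp [lp.single_apply_ne _ _ _ hv]
  map_smul' c a := by
    refine lp.ext (funext fun v => ?_)
    rw [lp.coeFn_smul]
    by_cases hv : v = w
    · subst hv
      simp [lp.single_apply_self]
    · simp [lp.single_apply_ne _ _ _ hv]
  norm_map' a := lp.norm_single (E := fun _ : Wd n => H) (p := 2) (by norm_num) w a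

theorem sgl_apply (w : Wd n) (h : H) : (sgl w h : Fk H n) = lp.single 2 w h := rfl

/-- Evaluation at the empty word, as a continuous linear map. -/
def ev0 : Fk H n →L[ℂ] H :=
  LinearMap.mkContinuous
    { toFun := fun f => f ([] : Wd n)
      map_add' := fun f g => by
        show (f + g : Fk H n) ([] : Wd n) = f ([] : Wd n) + g ([] : Wd n)
        rw [lp.coeFn_add]; rfl
      map_smul' := fun c f => by
        show (c • f : Fk H n) ([] : Wd n) = c • f ([] : Wd n)
        rw [lp.coeFn_smul]; rfl }
    1
    (fun f => by
      rw [one_mul]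
      exact lp.norm_apply_le_norm (by norm_num) f ([] : Wd n))

theorem ev0_apply (f : Fk H n) : (ev0 f : H) = f ([] : Wd n) := rfl

theorem cons_injective (i : Fin n) : Function.Injective (fun τ : Wd n => i :: τ) := by
  intro a b h
  simpa using h

/-- The underlying function of the shift. -/
def shFun (i : Fin n) (f : Fk H n) : ∀ _ : Wd n, H :=
  Function.extend (fun τ : Wd n => i :: τ) f 0

theorem shFun_cons (i : Fin n) (f : Fk H n) (τ : Wd n) : shFun i f (i :: τ) = f τ :=
  (cons_injective i).extend_apply _ _ _

theorem shFun_not (i : Fin n) (f : Fk H n) (w : Wd n) (hw : ¬∃ τ : Wd n, i :: τ = w) :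
    shFun i f w = 0 := by
  rw [shFun, Function.extend_apply' _ _ _ hw]
  rfl

theorem shFun_memℓp (i : Fin n) (f : Fk H n) : Memℓp (shFun i f) 2 := by
  apply memℓp_gen
  refine ((cons_injective i).summable_iff ?_).mp ?_
  · intro w hw
    rw [shFun_not i f w (fun h => hw (h.imp fun τ hτ => hτ))]
    simp [Real.zero_rpow (ne_of_gt two_toReal_pos)]
  · have h1 : (fun w => ‖shFun i f w‖ ^ (2 : ENNReal).toReal) ∘ (fun τ : Wd n => i :: τ)
        = fun τ => ‖f τ‖ ^ (2 : ENNReal).toReal := by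
      funext τ
      simp [Function.comp, shFun_cons]
    rw [h1]
    exact (memℓp_gen_iff two_toReal_pos).mp (lp.memℓp f)

/-- The shift `f ↦ f(i⁻¹ ·)` on `ℓ²(𝔽ₙ⁺, H)`, as a linear isometry. -/
def shI (i : Fin n) : Fk H n →ₗᵢ[ℂ] Fk H n where
  toFun f := ⟨shFun i f, shFun_memℓp i f⟩
  map_add' f g := by
    refine lp.ext (funext fun w => ?_)
    rw [lp.coeFn_add]
    show shFun i (f + g) w = shFun i f w + shFun i g w
    by_cases hw : ∃ τ : Wd n, (i :: τ : Wd n) = w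
    · obtain ⟨τ, rfl⟩ := hw
      rw [shFun_cons, shFun_cons, shFun_cons, lp.coeFn_add]
      rfl
    · rw [shFun_not _ _ _ hw, shFun_not _ _ _ hw, shFun_not _ _ _ hw, add_zero]
  map_smul' c f := by
    refine lp.ext (funext fun w => ?_)
    rw [lp.coeFn_smul]
    show shFun i (c • f) w = c • shFun i f w
    by_cases hw : ∃ τ : Wd n, (i :: τ : Wd n) = w
    · obtain ⟨τ, rfl⟩ := hw
      rw [shFun_cons, shFun_cons, lp.coeFn_smul]
      rfl
    · rw [shFun_not _ _ _ hw, shFun_not _ _ _ hw, smul_zero]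
  norm_map' f := by
    have h2 : ∀ g : Fk H n, ‖g‖ ^ (2 : ENNReal).toReal
        = ∑' w, ‖g w‖ ^ (2 : ENNReal).toReal :=
      fun g => lp.norm_rpow_eq_tsum two_toReal_pos g
    refine Real.rpow_left_injOn (ne_of_gt two_toReal_pos) (norm_nonneg _) (norm_nonneg _) ?_
    show ‖(⟨shFun i f, shFun_memℓp i f⟩ : Fk H n)‖ ^ (2 : ENNReal).toReal
        = ‖f‖ ^ (2 : ENNReal).toReal
    rw [h2, h2]
    have h3 : (∑' w, ‖shFun i f w‖ ^ (2 : ENNReal).toReal)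
        = ∑' τ, ‖f τ‖ ^ (2 : ENNReal).toReal := by
      rw [← Function.Injective.tsum_eq (cons_injective i)]
      · congr 1
        funext τ
        simp [shFun_cons]
      · intro w hw
        rw [Function.mem_support] at hw
        by_contra hr
        apply hw
        rw [shFun_not i f w (fun h => hr (h.imp fun τ hτ => hτ))]
        simp [Real.zero_rpow (ne_of_gt two_toReal_pos)]
    exact h3

theorem shI_apply (i : Fin n) (f : Fk H n) (w : Wd n) :
    (shI i f : Fk H n) w = shFun i f w := rfl

theorem shI_nil (i : Fin n) (f : Fk H n) : (shI i f : Fk H n) ([] : Wd n) = 0 := by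
  rw [shI_apply]
  exact shFun_not i f [] (by rintro ⟨τ, hτ⟩; simp at hτ)

theorem inner_sgl_sgl (w : Wd n) (x y : H) :
    ⟪(sgl w x : Fk H n), (sgl w y : Fk H n)⟫_ℂ = ⟪x, y⟫_ℂ := by
  rw [sgl_apply, sgl_apply, lp.inner_single_left, lp.single_apply_self]

theorem inner_sgl_f (x : H) (f : Fk H n) :
    ⟪(sgl ([] : Wd n) x : Fk H n), f⟫_ℂ = ⟪x, f ([] : Wd n)⟫_ℂ := by
  rw [sgl_apply, lp.inner_single_left]

theorem inner_f_sgl (f : Fk H n) (x : H) :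
    ⟪f, (sgl ([] : Wd n) x : Fk H n)⟫_ℂ = ⟪f ([] : Wd n), x⟫_ℂ := by
  rw [sgl_apply, lp.inner_single_right]

theorem inner_sgl_shI (i : Fin n) (x : H) (g : Fk H n) :
    ⟪(sgl ([] : Wd n) x : Fk H n), (shI i g : Fk H n)⟫_ℂ = 0 := by
  rw [inner_sgl_f, shI_nil, inner_zero_right]

theorem inner_shI_sgl (i : Fin n) (g : Fk H n) (x : H) :
    ⟪(shI i g : Fk H n), (sgl ([] : Wd n) x : Fk H n)⟫_ℂ = 0 := by
  rw [inner_f_sgl, shI_nil, inner_zero_left]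

theorem inner_shI_shI_ne {i j : Fin n} (hij : i ≠ j) (f g : Fk H n) :
    ⟪(shI i f : Fk H n), (shI j g : Fk H n)⟫_ℂ = 0 := by
  rw [lp.inner_eq_tsum]
  have h : (fun w => ⟪(shI i f : Fk H n) w, (shI j g : Fk H n) w⟫_ℂ) = fun _ => 0 := by
    funext w
    by_cases hw : ∃ τ : Wd n, (i :: τ : Wd n) = w
    · obtain ⟨τ, rfl⟩ := hw
      have : (shI j g : Fk H n) (i :: τ) = 0 := by
        rw [shI_apply]
        exact shFun_not j g _ (by rintro ⟨τ', hτ'⟩; exact hij (by injection hτ' with h1 _; exact h1.symm))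
      rw [this, inner_zero_right]
    · have : (shI i f : Fk H n) w = 0 := by
        rw [shI_apply]; exact shFun_not i f _ hw
      rw [this, inner_zero_left]
  rw [h, tsum_zero]

/-- The extended isometries on the dilation space. -/
def Wop (A R : Fin n → (H →L[ℂ] H)) (i : Fin n) : Fk H n →L[ℂ] Fk H n :=
  (sgl ([] : Wd n)).toContinuousLinearMap ∘L ((A i) ∘L ev0) +
  (shI i).toContinuousLinearMap ∘L (ContinuousLinearMap.id ℂ (Fk H n) -
    (sgl ([] : Wd n)).toContinuousLinearMap ∘L ((R i) ∘L ev0))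

theorem Wop_apply (A R : Fin n → (H →L[ℂ] H)) (i : Fin n) (f : Fk H n) :
    Wop A R i f = sgl ([] : Wd n) (A i (f ([] : Wd n)))
      + shI i (f - sgl ([] : Wd n) (R i (f ([] : Wd n)))) := rfl

theorem inner_Wop (A R : Fin n → (H →L[ℂ] H))
    (hAR : ∀ i j x y, ⟪A i x, A j y⟫_ℂ = if i = j then ⟪R i x, R j y⟫_ℂ else 0)
    (hRsa : ∀ (i : Fin n) (x y : H), ⟪x, R i y⟫_ℂ = ⟪R i x, R i y⟫_ℂ)
    (hRsa' : ∀ (i : Fin n) (x y : H), ⟪R i x, y⟫_ℂ = ⟪R i x, R i y⟫_ℂ)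
    (i j : Fin n) (f g : Fk H n) :
    ⟪Wop A R i f, Wop A R j g⟫_ℂ = if i = j then ⟪f, g⟫_ℂ else 0 := by
  rw [Wop_apply, Wop_apply, inner_add_left, inner_add_right, inner_add_right,
    inner_sgl_shI, inner_shI_sgl, inner_sgl_sgl]
  by_cases hij : i = j
  · subst hij
    rw [if_pos rfl, hAR, if_pos rfl, LinearIsometry.inner_map_map,
      inner_sub_left, inner_sub_right, inner_sub_right,
      inner_sgl_sgl, inner_f_sgl, inner_sgl_f]
    rw [hRsa i (f ([] : Wd n)) (g ([] : Wd n)), hRsa' i (f ([] : Wd n)) (g ([] : Wd n))]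
    ring
  · rw [if_neg hij, hAR, if_neg hij, inner_shI_shI_ne hij]
    simp

theorem Wop_single (A R : Fin n → (H →L[ℂ] H)) (i : Fin n) (x : H) (hx : R i x = x) :
    Wop A R i (sgl ([] : Wd n) x) = sgl ([] : Wd n) (A i x) := by
  rw [Wop_apply]
  have h0 : (sgl ([] : Wd n) x : Fk H n) ([] : Wd n) = x := by
    rw [sgl_apply, lp.single_apply_self]
  rw [h0, hx, sub_self, map_zero, add_zero]

/-- There is a *-representation `π` of `C*(S₁,…,Sₙ)` on `E ⊇ H` with
`L(p) = π(p(S₁,…,Sₙ)) L(g₀)` for all `p ∈ ℂΣ` (stated via isometries with orthogonal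
ranges) iff `K₁ = K₂` on `Λ_Σ`. -/
theorem stmt3 {n : ℕ} (hn : 0 < n) (S : Set (Wd n)) (hne : S.Nonempty) (hadm : Adm S)
    (L : Wd n → (H →L[ℂ] H)) :
    Nonempty (IsomRep n H S L) ↔
      ∀ x y : {p : Wd n × Wd n // p.1 ++ p.2 ∈ S}, K1 L x.1 y.1 = K2 L x.1 y.1 := by
  constructor
  · rintro ⟨R⟩
    exact forward_dir S hadm L R
  · intro hK
    -- derive the two kernel identities
    have hk : KeyHyp S L := by
      constructor
      · intro i u v hu hv h k
        have hxu : (([i], u) : Wd n × Wd n).1 ++ (([i], u) : Wd n × Wd n).2 ∈ S := by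
          simpa using hu
        have hxv : (([i], v) : Wd n × Wd n).1 ++ (([i], v) : Wd n × Wd n).2 ∈ S := by
          simpa using hv
        have h12 := hK ⟨([i], u), hxu⟩ ⟨([i], v), hxv⟩
        have h13 := congrArg (fun T : H →L[ℂ] H => ⟪h, T k⟫_ℂ) h12
        simp only at h13
        have e1 : ⟪h, (K1 L ([i], u) ([i], v)) k⟫_ℂ = ⟪L (i :: u) h, L (i :: v) k⟫_ℂ := by
          rw [K1]
          dsimp only
          rw [ContinuousLinearMap.mul_apply, adjoint_inner_right, List.singleton_append,
            List.singleton_append]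
        have e2 : ⟪h, (K2 L ([i], u) ([i], v)) k⟫_ℂ = ⟪L u h, L v k⟫_ℂ := by
          rw [K2]
          dsimp only
          have hpp : pfx ([i] : Wd n) [i] := ⟨[], (List.append_nil _).symm⟩
          rw [if_pos hpp]
          rw [show wq ([i] : Wd n) ([i] : Wd n) ++ v = v from rfl]
          rw [ContinuousLinearMap.mul_apply, adjoint_inner_right]
        rw [e1, e2] at h13
        exact h13
      · intro i j hij u v hu hv h k
        have hxu : (([i], u) : Wd n × Wd n).1 ++ (([i], u) : Wd n × Wd n).2 ∈ S := by
          simpa using hu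
        have hxv : (([j], v) : Wd n × Wd n).1 ++ (([j], v) : Wd n × Wd n).2 ∈ S := by
          simpa using hv
        have h12 := hK ⟨([i], u), hxu⟩ ⟨([j], v), hxv⟩
        have h13 := congrArg (fun T : H →L[ℂ] H => ⟪h, T k⟫_ℂ) h12
        simp only at h13
        have e1 : ⟪h, (K1 L ([i], u) ([j], v)) k⟫_ℂ = ⟪L (i :: u) h, L (j :: v) k⟫_ℂ := by
          rw [K1]
          dsimp only
          rw [ContinuousLinearMap.mul_apply, adjoint_inner_right, List.singleton_append,
            List.singleton_append]
        have npfx1 : ¬ pfx ([i] : Wd n) [j] := by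
          rintro ⟨τ, hτ⟩
          rw [List.singleton_append] at hτ
          injection hτ with h1 _
          exact hij h1.symm
        have npfx2 : ¬ pfx ([j] : Wd n) [i] := by
          rintro ⟨τ, hτ⟩
          rw [List.singleton_append] at hτ
          injection hτ with h1 _
          exact hij h1
        have e2 : ⟪h, (K2 L ([i], u) ([j], v)) k⟫_ℂ = 0 := by
          rw [K2]
          dsimp only
          rw [if_neg npfx1, if_neg npfx2, ContinuousLinearMap.zero_apply, inner_zero_right]
        rw [e1, e2] at h13
        exact h13
    -- the projections onto the closed domains
    have hARinner : ∀ (i j : Fin n) (x y : H), ⟪Amap hk i x, Amap hk j y⟫_ℂ =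
        if i = j then ⟪((Dcl S L i).subtypeL ∘L Submodule.orthogonalProjectionOnto (Dcl S L i)) x,
          ((Dcl S L j).subtypeL ∘L Submodule.orthogonalProjectionOnto (Dcl S L j)) y⟫_ℂ else 0 := by
      intro i j x y
      exact Amap_inner hk i j x y
    have hRsa : ∀ (i : Fin n) (x y : H),
        ⟪x, ((Dcl S L i).subtypeL ∘L Submodule.orthogonalProjectionOnto (Dcl S L i)) y⟫_ℂ =
        ⟪((Dcl S L i).subtypeL ∘L Submodule.orthogonalProjectionOnto (Dcl S L i)) x,
          ((Dcl S L i).subtypeL ∘L Submodule.orthogonalProjectionOnto (Dcl S L i)) y⟫_ℂ := by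
      intro i x y
      have h0 := Submodule.starProjection_inner_eq_zero (K := Dcl S L i) x
        ((Submodule.orthogonalProjectionOnto (Dcl S L i) y : H)) (Submodule.coe_mem _)
      rw [inner_sub_left, sub_eq_zero] at h0
      exact h0
    have hRsa' : ∀ (i : Fin n) (x y : H),
        ⟪((Dcl S L i).subtypeL ∘L Submodule.orthogonalProjectionOnto (Dcl S L i)) x, y⟫_ℂ =
        ⟪((Dcl S L i).subtypeL ∘L Submodule.orthogonalProjectionOnto (Dcl S L i)) x,
          ((Dcl S L i).subtypeL ∘L Submodule.orthogonalProjectionOnto (Dcl S L i)) y⟫_ℂ := by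
      intro i x y
      have := congrArg (starRingEnd ℂ) (hRsa i y x)
      rwa [inner_conj_symm, inner_conj_symm] at this
    refine ⟨{
      E := Fk H n
      instN := by infer_instance
      instI := by infer_instance
      instC := by infer_instance
      ι := sgl ([] : Wd n)
      W := Wop (Amap hk) (fun i => (Dcl S L i).subtypeL ∘L Submodule.orthogonalProjectionOnto (Dcl S L i))
      isom := ?_
      orth := ?_
      moment := ?_ }⟩
    · intro i
      refine ContinuousLinearMap.ext fun f => ?_
      refine ext_inner_left ℂ fun g => ?_
      rw [ContinuousLinearMap.mul_apply, adjoint_inner_right,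
        inner_Wop _ _ hARinner hRsa hRsa', if_pos rfl, ContinuousLinearMap.one_apply]
    · intro i j hij
      refine ContinuousLinearMap.ext fun f => ?_
      refine ext_inner_left ℂ fun g => ?_
      rw [ContinuousLinearMap.mul_apply, adjoint_inner_right,
        inner_Wop _ _ hARinner hRsa hRsa', if_neg hij, ContinuousLinearMap.zero_apply,
        inner_zero_right]
    · intro σ
      induction σ with
      | nil =>
        intro hσ h
        rw [wordOp_nil, ContinuousLinearMap.one_apply]
      | cons i σ' ih =>
        intro hσ h
        have hσ' : σ' ∈ S := hadm [i] σ' (by simpa using hσ)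
        rw [wordOp_cons, ContinuousLinearMap.mul_apply, ih hσ' h]
        have hmem : L σ' h ∈ Dcl S L i := mem_Dcl hσ h
        have hx : ((Dcl S L i).subtypeL ∘L Submodule.orthogonalProjectionOnto (Dcl S L i)) (L σ' h)
            = L σ' h := Submodule.starProjection_eq_self_iff.mpr hmem
        rw [show ((sgl ([] : Wd n)) ((L σ') h) : Fk H n)
            = (sgl ([] : Wd n)) ((L σ') h) from rfl]
        rw [Wop_single _ _ i _ hx, Amap_moment hk hσ h]

end
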